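/- Let f : ℝ^m → ℝ be continuously differentiable with gradient field c̃ = ∇f : ℝ^m → ℝ^m, and let X ⊆ ℝ^m be nonempty, closed, and convex. Then for all x, y ∈ X: x ⪯_c y if and only if x ⪯_f y, where c denotes the restriction of c̃ to X. -/

import Mathlib

open Set

noncomputable section

/-- The path point `y_ε = ε x + (1 - ε) y`. -/
def pathPt {m : ℕ} (x y : EuclideanSpace ℝ (Fin m)) (ε : ℝ) :
    EuclideanSpace ℝ (Fin m) :=
  ε • x + (1 - ε) • y

/-- The linear vector polyorder `x ⪯_c y`: for all `ε ∈ [0,1]`,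
`⟨x, c(y_ε)⟩ ≤ ⟨y, c(y_ε)⟩`. -/
def vecLe {m : ℕ} (c : EuclideanSpace ℝ (Fin m) → EuclideanSpace ℝ (Fin m))
    (x y : EuclideanSpace ℝ (Fin m)) : Prop :=
  ∀ ε ∈ Icc (0:ℝ) 1,
    (inner ℝ x (c (pathPt x y ε)) : ℝ) ≤ inner ℝ y (c (pathPt x y ε))

/-- The strict part `x ≺_c y` of the linear vector polyorder. -/
def vecLt {m : ℕ} (c : EuclideanSpace ℝ (Fin m) → EuclideanSpace ℝ (Fin m))
    (x y : EuclideanSpace ℝ (Fin m)) : Prop :=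
  vecLe c x y ∧ ¬ vecLe c y x

/-- The linear scalar polyorder `x ⪯_f y`. -/
def scalarLe {m : ℕ} (f : EuclideanSpace ℝ (Fin m) → ℝ)
    (x y : EuclideanSpace ℝ (Fin m)) : Prop :=
  ∀ ε₁ ∈ Icc (0:ℝ) 1, ∀ ε₂ ∈ Icc (0:ℝ) 1, ε₁ < ε₂ →
    f (pathPt x y ε₁) ≥ f (pathPt x y ε₂)

/-- For a continuously differentiable `f` with gradient field `∇f`, weak
dominance for the gradient field coincides with weak descent for `f`. -/
theorem vecLe_iff_scalarLe_of_gradient {m : ℕ}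
    (f : EuclideanSpace ℝ (Fin m) → ℝ) (hf : ContDiff ℝ 1 f)
    (X : Set (EuclideanSpace ℝ (Fin m)))
    (hXne : X.Nonempty) (hXcl : IsClosed X) (hXconv : Convex ℝ X) :
    ∀ x ∈ X, ∀ y ∈ X, (vecLe (gradient f) x y ↔ scalarLe f x y) := by

  intro x hx y hy
  -- the scalar function along the path
  set g : ℝ → ℝ := fun ε => f (pathPt x y ε) with hg
  -- derivative of the path
  have hpath : ∀ ε : ℝ, HasDerivAt (fun t => pathPt x y t) (x - y) ε := by
    intro ε
    have : (fun t : ℝ => pathPt x y t) = fun t : ℝ => y + t • (x - y) := by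
      funext t
      simp only [pathPt, smul_sub, sub_smul, one_smul]
      abel
    rw [this]
    simpa using ((hasDerivAt_id ε).smul_const (x - y)).const_add y
  have hdiff := hf.differentiable one_ne_zero
  -- derivative of g
  have hgderiv : ∀ ε : ℝ,
      HasDerivAt g (inner ℝ (gradient f (pathPt x y ε)) (x - y) : ℝ) ε := by
    intro ε
    have h1 : HasGradientAt f (gradient f (pathPt x y ε)) (pathPt x y ε) :=
      (hdiff (pathPt x y ε)).hasGradientAt
    have h2 := h1.hasFDerivAt.comp_hasDerivAt ε (hpath ε)
    have h3 : HasDerivAt g _ ε := h2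
    simpa [InnerProductSpace.toDual_apply_apply] using h3
  -- continuity of the derivative
  have hcont : Continuous fun ε : ℝ =>
      (inner ℝ (gradient f (pathPt x y ε)) (x - y) : ℝ) := by
    have hgrad : Continuous fun p => gradient f p := by
      have : Continuous fun p => fderiv ℝ f p := hf.continuous_fderiv one_ne_zero
      exact ((InnerProductSpace.toDual ℝ
        (EuclideanSpace ℝ (Fin m))).symm.continuous.comp this :)
    have hpc : Continuous fun ε : ℝ => pathPt x y ε := by
      unfold pathPt; fun_prop
    exact (continuous_inner.comp ((hgrad.comp hpc).prodMk continuous_const))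
  constructor
  · -- vecLe → scalarLe
    intro h ε₁ hε₁ ε₂ hε₂ hlt
    have hanti : AntitoneOn g (Icc (0:ℝ) 1) := by
      apply antitoneOn_of_deriv_nonpos (convex_Icc 0 1)
      · exact ((hf.continuous).comp (by unfold pathPt; fun_prop)).continuousOn
      · intro t ht
        exact ((hgderiv t).differentiableAt).differentiableWithinAt
      · intro t ht
        rw [interior_Icc] at ht
        rw [(hgderiv t).deriv]
        have := h t (Ioo_subset_Icc_self ht)
        have hrw : (inner ℝ (gradient f (pathPt x y t)) (x - y) : ℝ)
            = (inner ℝ x (gradient f (pathPt x y t)) : ℝ)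
              - (inner ℝ y (gradient f (pathPt x y t)) : ℝ) := by
          rw [real_inner_comm, inner_sub_left]
        linarith [hrw ▸ (sub_nonpos.mpr this)]
    exact hanti hε₁ hε₂ hlt.le
  · -- scalarLe → vecLe
    intro h
    have hanti : ∀ a ∈ Icc (0:ℝ) 1, ∀ b ∈ Icc (0:ℝ) 1, a < b → g b ≤ g a := by
      intro a ha b hb hab; exact h a ha b hb hab
    -- derivative nonpositive on the open interval
    have hIoo : ∀ t ∈ Ioo (0:ℝ) 1,
        (inner ℝ (gradient f (pathPt x y t)) (x - y) : ℝ) ≤ 0 := by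
      intro t ht
      have hd := hgderiv t
      rw [hasDerivAt_iff_tendsto_slope] at hd
      have hd' : Filter.Tendsto (slope g t) (nhdsWithin t (Ioi t))
          (nhds (inner ℝ (gradient f (pathPt x y t)) (x - y) : ℝ)) :=
        hd.mono_left (nhdsWithin_mono t (fun u hu => ne_of_gt hu))
      refine le_of_tendsto hd' ?_
      filter_upwards [Ioo_mem_nhdsGT_of_mem ⟨le_rfl, ht.2⟩] with u hu
      have hgu : g u ≤ g t :=
        hanti t (Ioo_subset_Icc_self ht) u ⟨le_of_lt (lt_trans ht.1 hu.1),
          hu.2.le⟩ hu.1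
      have : slope g t u = (g u - g t) / (u - t) := by
        rw [slope_def_field]
      rw [this]
      exact div_nonpos_of_nonpos_of_nonneg (by linarith) (by linarith [hu.1])
    -- extend to the closed interval by continuity
    have hIcc : ∀ t ∈ Icc (0:ℝ) 1,
        (inner ℝ (gradient f (pathPt x y t)) (x - y) : ℝ) ≤ 0 := by
      have hclosed : IsClosed {t : ℝ |
          (inner ℝ (gradient f (pathPt x y t)) (x - y) : ℝ) ≤ 0} :=
        isClosed_le (by fun_prop) continuous_const
      have hsub : Icc (0:ℝ) 1 ⊆ {t : ℝ |
          (inner ℝ (gradient f (pathPt x y t)) (x - y) : ℝ) ≤ 0} := by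
        rw [← closure_Ioo (by norm_num : (0:ℝ) ≠ 1)]
        exact hclosed.closure_subset_iff.mpr hIoo
      exact fun t ht => hsub ht
    intro ε hε
    have := hIcc ε hε
    have hrw : (inner ℝ (gradient f (pathPt x y ε)) (x - y) : ℝ)
        = (inner ℝ x (gradient f (pathPt x y ε)) : ℝ)
          - (inner ℝ y (gradient f (pathPt x y ε)) : ℝ) := by
      rw [real_inner_comm, inner_sub_left]
    linarith [hrw ▸ this]
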